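/- Let (R, P, X) be a subproblem where R is a clique and every vertex of P is adjacent to all of R. If u ∈ P is adjacent to every other vertex of P (i.e., |N(u) ∩ P| = |P| - 1), then every maximal clique of G of the form R ∪ S with S ⊆ P contains u. -/

import Mathlib

open SimpleGraph

/-- A maximal clique: a clique not properly contained in any other clique. -/
def MaximalClique {V : Type*} (G : SimpleGraph V) (S : Set V) : Prop :=
  G.IsClique S ∧ ∀ T : Set V, G.IsClique T → S ⊆ T → S = T

/-- The graph obtained from `G` by deleting vertex `u` (removing all its incident edges). -/
def delVert {V : Type*} (G : SimpleGraph V) (u : V) : SimpleGraph V where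
  Adj a b := G.Adj a b ∧ a ≠ u ∧ b ≠ u
  symm := by constructor; intro a b h; exact ⟨h.1.symm, h.2.2, h.2.1⟩
  loopless := by constructor; intro a h; exact G.irrefl h.1

theorem stmt_12 {V : Type*} [Fintype V] (G : SimpleGraph V) (R P X : Set V)
    (hR : G.IsClique R)
    (hadjP : ∀ x ∈ P, ∀ r ∈ R, G.Adj x r)
    (u : V) (hu : u ∈ P)
    (hdom : ∀ x ∈ P, x ≠ u → G.Adj u x) :
    ∀ S ⊆ P, MaximalClique G (R ∪ S) → u ∈ R ∪ S := by
  intro S hSP ⟨hcl, hmax⟩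
  by_contra hnu
  have hadju : ∀ v ∈ R ∪ S, G.Adj u v := by
    rintro v (hv | hv)
    · exact hadjP u hu v hv
    · exact hdom v (hSP hv) (fun h => hnu (Or.inr (h ▸ hv)))
  have hcl' : G.IsClique (insert u (R ∪ S)) := by
    intro a ha b hb hab
    rcases ha with rfl | ha
    · rcases hb with rfl | hb
      · exact absurd rfl hab
      · exact hadju b hb
    · rcases hb with rfl | hb
      · exact (hadju a ha).symm
      · exact hcl ha hb hab
  have := hmax _ hcl' (Set.subset_insert _ _)
  exact hnu (this ▸ Set.mem_insert u _)
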